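/- Let G = G₁ * G₂ be a free product of groups, and for s ∈ {1,2} let f_s : G_s → ℝ be bounded functions with f_s(x⁻¹) = −f_s(x). Define g : G → ℝ on a reduced word x = x₁x₂⋯x_n (with x_i in alternating factors) by g(x) = ∑ f_{s_i}(x_i), and g(1) = 0. Then g is a quasimorphism on G. -/

import Mathlib

open Monoid

/-- Rolli's function: on a free product, sum the values of the `f i` over the letters of the
unique reduced word representing an element. -/
noncomputable def rolliSum (M : Bool → Type*) [∀ i, Group (M i)] [∀ i, DecidableEq (M i)]
    (f : ∀ i, M i → ℝ) (x : CoprodI M) : ℝ :=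
  ((CoprodI.Word.equiv x).toList.map fun p => f p.1 p.2).sum

section aux

open Monoid.CoprodI Monoid.CoprodI.Word

variable {M : Bool → Type*} [∀ i, Group (M i)] [∀ i, DecidableEq (M i)]

/-- Sum of `f` over the letters of a word. -/
noncomputable def gwSum (f : ∀ i, M i → ℝ) (w : Word M) : ℝ :=
  (w.toList.map fun p => f p.1 p.2).sum

variable (f : ∀ i, M i → ℝ)

theorem gwSum_empty : gwSum f (Word.empty : Word M) = 0 := rfl

theorem gwSum_cons {i : Bool} (m : M i) (w : Word M) (h1 : w.fstIdx ≠ some i) (h2 : m ≠ 1) :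
    gwSum f (Word.cons m w h1 h2) = f i m + gwSum f w := by
  simp [gwSum, Word.cons]

theorem gwSum_rcons (hf1 : ∀ i, f i (1 : M i) = 0) {i : Bool} (p : Word.Pair M i) :
    gwSum f (Word.rcons p) = f i p.head + gwSum f p.tail := by
  rw [Word.rcons]
  split
  · next h => rw [h, hf1, zero_add]
  · next h => rw [gwSum_cons]

theorem gwSum_eq_head_tail (hf1 : ∀ i, f i (1 : M i) = 0) (i : Bool) (w : Word M) :
    gwSum f w = f i (Word.equivPair i w).head + gwSum f (Word.equivPair i w).tail := by
  conv_lhs => rw [← (Word.equivPair i).symm_apply_apply w]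
  rw [Word.equivPair_symm, gwSum_rcons f hf1]

theorem gwSum_of_smul (hf1 : ∀ i, f i (1 : M i) = 0) {i : Bool} (m : M i) (w : Word M) :
    gwSum f (CoprodI.of m • w) =
      gwSum f w + f i (m * (Word.equivPair i w).head) - f i (Word.equivPair i w).head := by
  rw [Word.of_smul_def, gwSum_rcons f hf1]
  rw [gwSum_eq_head_tail f hf1 i w]
  ring

theorem head_eq_one_of_fstIdx_ne {i : Bool} {w : Word M} (h : w.fstIdx ≠ some i) :
    (Word.equivPair i w).head = 1 := by
  rw [Word.equivPair_eq_of_fstIdx_ne h]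

theorem fstIdx_of_smul_of_ne_one {i : Bool} (m : M i) (w : Word M)
    (h : m * (Word.equivPair i w).head ≠ 1) :
    (CoprodI.of m • w).fstIdx = some i := by
  rw [Word.of_smul_def, Word.rcons, dif_neg h]
  exact Word.fstIdx_cons _ _ _ _

theorem equiv_of_mul {i : Bool} (m : M i) (z : CoprodI M) :
    Word.equiv (CoprodI.of m * z) = CoprodI.of m • (Word.equiv z) := by
  show (CoprodI.of m * z) • (Word.empty : Word M) = CoprodI.of m • (z • Word.empty)
  rw [mul_smul]

/-- Main lemma: exact 3-term formula for the defect, with control of the first index. -/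
theorem rolli_main (hf1 : ∀ i, f i (1 : M i) = 0)
    (hodd : ∀ i (x : M i), f i x⁻¹ = -f i x) (w : Word M) :
    ∀ y : CoprodI M, ∃ (i : Bool) (a b : M i),
      gwSum f (Word.equiv (Word.prod w * y)) =
        gwSum f w + gwSum f (Word.equiv y) + (f i (a * b) - f i a - f i b) ∧
      ((Word.equiv (Word.prod w * y)).fstIdx = w.fstIdx ∨
        gwSum f (Word.equiv (Word.prod w * y)) = gwSum f w + gwSum f (Word.equiv y)) := by
  induction w using Word.consRecOn with
  | empty =>
    intro y
    refine ⟨true, 1, 1, ?_, Or.inr ?_⟩ <;>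
      simp [gwSum_empty, hf1, Word.prod_empty]
  | cons i a w' hw' ha ih =>
    intro y
    obtain ⟨i', a', b', hE, hD⟩ := ih y
    have hxy : Word.prod (Word.cons a w' hw' ha) * y = CoprodI.of a * (Word.prod w' * y) := by
      rw [Word.prod_cons, mul_assoc]
    set W := Word.equiv (Word.prod w' * y) with hW
    set h := (Word.equivPair i W).head with hh
    have hleft : Word.equiv (Word.prod (Word.cons a w' hw' ha) * y) = CoprodI.of a • W := by
      rw [hxy, equiv_of_mul]
    have hg : gwSum f (Word.equiv (Word.prod (Word.cons a w' hw' ha) * y)) =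
        gwSum f W + f i (a * h) - f i h := by
      rw [hleft, gwSum_of_smul f hf1]
    rcases hD with hD1 | hD2
    · -- first index preserved; no interaction with the new letter
      have hne : W.fstIdx ≠ some i := by rw [hD1]; exact hw'
      have h1 : h = 1 := head_eq_one_of_fstIdx_ne hne
      refine ⟨i', a', b', ?_, Or.inl ?_⟩
      · rw [hg, h1, mul_one, hf1, hE, gwSum_cons]
        ring
      · rw [hleft, Word.fstIdx_cons]
        apply fstIdx_of_smul_of_ne_one
        rw [← hh, h1, mul_one]
        exact ha
    · by_cases hah : a * h = 1
      · -- the new letter also cancels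
        have hhv : h = a⁻¹ := eq_inv_of_mul_eq_one_right hah
        have hfh : f i h = - f i a := by rw [hhv, hodd]
        refine ⟨true, 1, 1, ?_, Or.inr ?_⟩ <;>
        · rw [hg, hD2, gwSum_cons, hah, hfh]
          simp only [mul_one, hf1]
          ring
      · refine ⟨i, a, h, ?_, Or.inl ?_⟩
        · rw [hg, hD2, gwSum_cons]
          ring
        · rw [hleft]
          rw [fstIdx_of_smul_of_ne_one a W hah, Word.fstIdx_cons]

end aux

/-- Rolli's construction: given bounded odd functions `f i` on the factors of a free product
`G₁ * G₂`, the function summing `f` over the letters of the reduced word of an element is a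
quasimorphism. -/
theorem stmt16 (M : Bool → Type*) [∀ i, Group (M i)] [∀ i, DecidableEq (M i)]
    (f : ∀ i, M i → ℝ) (B : ℝ) (hbd : ∀ i (x : M i), |f i x| ≤ B)
    (hodd : ∀ i (x : M i), f i x⁻¹ = -f i x) :
    ∃ D : ℝ, ∀ x y : CoprodI M,
      |rolliSum M f (x * y) - rolliSum M f x - rolliSum M f y| ≤ D := by
  have hf1 : ∀ i, f i (1 : M i) = 0 := by
    intro i
    have := hodd i 1
    rw [inv_one] at this
    linarith
  refine ⟨3 * B, fun x y => ?_⟩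
  obtain ⟨i, a, b, hE, -⟩ := rolli_main f hf1 hodd (CoprodI.Word.equiv x) y
  have hx : CoprodI.Word.prod (CoprodI.Word.equiv x) = x :=
    (CoprodI.Word.equiv).symm_apply_apply x
  rw [hx] at hE
  have h1 : rolliSum M f (x * y) = gwSum f (CoprodI.Word.equiv (x * y)) := rfl
  have h2 : rolliSum M f x = gwSum f (CoprodI.Word.equiv x) := rfl
  have h3 : rolliSum M f y = gwSum f (CoprodI.Word.equiv y) := rfl
  rw [h1, h2, h3, hE]
  have h5 := abs_le.mp (hbd i (a * b))
  have h6 := abs_le.mp (hbd i a)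
  have h7 := abs_le.mp (hbd i b)
  have h4 : |f i (a*b) - f i a - f i b| ≤ 3 * B := by
    rw [abs_le]; constructor <;> linarith
  calc |gwSum f (CoprodI.Word.equiv x) + gwSum f (CoprodI.Word.equiv y) +
        (f i (a*b) - f i a - f i b) - gwSum f (CoprodI.Word.equiv x) -
        gwSum f (CoprodI.Word.equiv y)| = |f i (a*b) - f i a - f i b| := by ring_nf
    _ ≤ 3 * B := h4
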